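/- Let K ⊆ L be a field extension and let a ∈ L be algebraic over K of degree n. If m is a natural number with 1 ≤ m ≤ (n+1)/4 and A = span_K{a, a³, …, a^{2m−1}}, then (A·A) ∩ A = {0}, where A·A denotes the K-subspace of L spanned by all products x·y with x, y ∈ A. -/

import Mathlib

section
variable {K L : Type*} [Field K] [Field L] [Algebra K L]

/-- A basis `v` of `A` is matched to a basis `w` of `B` if for every `b ∈ B` and
every `i`, `v i * b ∈ A` implies that `b` lies in the span of `w j`, `j ≠ i`. -/
def BasesMatched {n : ℕ} {A B : Submodule K L}
    (v : Module.Basis (Fin n) K A) (w : Module.Basis (Fin n) K B) : Prop :=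
  ∀ (b : B) (i : Fin n), (v i : L) * (b : L) ∈ A →
    b ∈ Submodule.span K (⇑w '' {j : Fin n | j ≠ i})

/-- `A` is matched with `B` if every basis of `A` can be matched to a basis of `B`. -/
def SubspaceMatched (n : ℕ) (A B : Submodule K L) : Prop :=
  ∀ v : Module.Basis (Fin n) K A, ∃ w : Module.Basis (Fin n) K B, BasesMatched v w

/-- The extension `K ⊆ L` has the linear matching property if for every `n ≥ 1` and
all `n`-dimensional subspaces `A`, `B` of `L` with `1 ∉ B`, `A` is matched with `B`. -/
def HasLinearMatchingProperty (K L : Type*) [Field K] [Field L] [Algebra K L] : Prop :=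
  ∀ n : ℕ, 1 ≤ n → ∀ A B : Submodule K L,
    Module.finrank K A = n → Module.finrank K B = n → (1 : L) ∉ B →
    SubspaceMatched n A B

/-- A strong matching from `A` to `B` is a linear isomorphism `φ : A → B` such that
every basis `v` of `A` is matched to the basis `φ ∘ v` of `B`. -/
def IsStrongMatching (n : ℕ) (A B : Submodule K L) (φ : A ≃ₗ[K] B) : Prop :=
  ∀ v : Module.Basis (Fin n) K A, BasesMatched v (v.map φ)

/-- Two strong matchings `f, g : A → B` are equivalent if there is a linear
isomorphism `φ : A → A` with `a * f a = φ a * g (φ a)` for all `a ∈ A`. -/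
def EquivStrongMatchings {A B : Submodule K L} (f g : A ≃ₗ[K] B) : Prop :=
  ∃ φ : A ≃ₗ[K] A, ∀ a : A, (a : L) * (f a : L) = (φ a : L) * (g (φ a) : L)

end

/-- The extension `K ⊆ L` fails to have the linear acyclic matching property at
order `m` if there are `m`-dimensional subspaces `A`, `B` of `L` and strong
matchings `f ≠ g` from `A` to `B` with `f ∼ g`. -/
def FailsLinearAcyclicAt (K L : Type*) [Field K] [Field L] [Algebra K L] (m : ℕ) : Prop :=
  ∃ (A B : Submodule K L) (f g : A ≃ₗ[K] B),
    Module.finrank K A = m ∧ Module.finrank K B = m ∧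
    IsStrongMatching m A B f ∧ IsStrongMatching m A B g ∧
    f ≠ g ∧ EquivStrongMatchings f g

/-- If `a ∈ L` is algebraic over `K` of degree `n` and `1 ≤ m ≤ (n+1)/4`, then the
subspace `A = span{a, a³, …, a^(2m-1)}` satisfies `(A·A) ⊓ A = 0`. -/
theorem stmt16 (K L : Type*) [Field K] [Field L] [Algebra K L]
    (a : L) (ha : IsIntegral K a) (n : ℕ) (hn : (minpoly K a).natDegree = n)
    (m : ℕ) (hm1 : 1 ≤ m) (hm2 : m ≤ (n + 1) / 4)
    (A : Submodule K L)
    (hA : A = Submodule.span K (Set.range fun i : Fin m => a ^ (2 * (i : ℕ) + 1))) :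
    (A * A) ⊓ A = ⊥ := by
  have h4m : 4 * m ≤ n + 1 := by omega
  have hli : LinearIndependent K fun i : Fin n => a ^ (i : ℕ) := by
    subst hn; exact linearIndependent_pow a
  set f : Fin n → L := fun i => a ^ (i : ℕ) with hf
  set sOdd : Set (Fin n) := {i | (i : ℕ) % 2 = 1} with hs1
  set sEven : Set (Fin n) := {i | (i : ℕ) % 2 = 0 ∧ 0 < (i : ℕ)} with hs2
  have hdisj : Disjoint sEven sOdd := by
    rw [Set.disjoint_left]
    rintro i ⟨h0, _⟩ h1
    simp only [hs1, Set.mem_setOf_eq] at h1; omega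
  have hAodd : A ≤ Submodule.span K (f '' sOdd) := by
    rw [hA, Submodule.span_le]
    rintro x ⟨i, rfl⟩
    apply Submodule.subset_span
    have hi : 2 * (i : ℕ) + 1 < n := by have := i.2; omega
    exact ⟨⟨2 * (i : ℕ) + 1, hi⟩, by simp [hs1, Nat.mul_add_mod], rfl⟩
  have hAA : A * A ≤ Submodule.span K (f '' sEven) := by
    rw [hA, Submodule.span_mul_span, Submodule.span_le]
    rintro x ⟨y, ⟨i, rfl⟩, z, ⟨j, rfl⟩, rfl⟩
    apply Submodule.subset_span
    have hij : 2 * (i : ℕ) + 1 + (2 * (j : ℕ) + 1) < n := by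
      have := i.2; have := j.2; omega
    refine ⟨⟨2 * (i : ℕ) + 1 + (2 * (j : ℕ) + 1), hij⟩, ⟨by simp; omega, by simp⟩, ?_⟩
    simp [hf, pow_add]
  have := hli.disjoint_span_image hdisj
  rw [eq_bot_iff]
  intro x hx
  exact (Submodule.mem_bot K).mpr
    (Submodule.disjoint_def.mp this x (hAA hx.1) (hAodd hx.2))
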